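/- arXiv:1801.01027 — 2 statements merged into one kernel-verified Lean document; each statement's English description precedes it below -/
import Mathlib

section
/- Let s ≥ 1, σ > −1/2, ξ ∈ ℝ, and let Ω ⊂ ℝˢ be a compact set. Then there is a constant C > 0 (depending on s, σ, ξ and Ω) such that for every x = (x₁,…,x_s) ∈ ℤˢ with ‖x‖ ≥ 2 and every integer z with z ≥ ‖x‖² − 1, the Lebesgue measure of the set A(z,x) = {α ∈ Ω : |z − (Σ_{i=1}^{s} α_i x_i + ξ)²| < ‖x‖^{−σ}} is at most C · ‖x‖^{−σ−1} · z^{−1/2}. -/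
open MeasureTheory

set_option maxHeartbeats 1000000 in
/-- **Lemma (volume bound for the exceptional sets `A(z,x)`).**
Let `s ≥ 1`, `σ > −1/2`, `ξ ∈ ℝ`, and `Ω ⊆ ℝˢ` compact.  There is `C > 0` such that for all
`x ∈ ℤˢ` with `‖x‖ ≥ 2` and all integers `z ≥ ‖x‖² − 1`, the Lebesgue measure of
`A(z,x) = {α ∈ Ω : |z − (Σ α_i x_i + ξ)²| < ‖x‖^(−σ)}` is at most
`C·‖x‖^(−σ−1)·z^(−1/2)`. -/
theorem volume_bound_for_exceptional_sets
    (s : ℕ) (hs : 1 ≤ s) (σ : ℝ) (hσ : -(1 / 2 : ℝ) < σ) (ξ : ℝ)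
    (Ω : Set (Fin s → ℝ)) (hΩ : IsCompact Ω) :
    ∃ C > (0 : ℝ), ∀ x : Fin s → ℤ, 2 ≤ ‖fun i => (x i : ℝ)‖ →
      ∀ z : ℤ, ‖fun i => (x i : ℝ)‖ ^ 2 - 1 ≤ (z : ℝ) →
      volume {α ∈ Ω |
          |(z : ℝ) - ((∑ i : Fin s, α i * (x i : ℝ)) + ξ) ^ 2| <
            ‖fun i => (x i : ℝ)‖ ^ (-σ)} ≤
        ENNReal.ofReal
          (C * ‖fun i => (x i : ℝ)‖ ^ (-σ - 1) * (z : ℝ) ^ (-(1 : ℝ) / 2)) := by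
  obtain ⟨R, hR, hΩR⟩ : ∃ R, 0 < R ∧ Ω ⊆ Metric.closedBall 0 R :=
    hΩ.isBounded.subset_closedBall_lt 0 0
  refine ⟨4 * (2 * R) ^ (s - 1), by positivity, ?_⟩
  intro x hx z hz
  set X : Fin s → ℝ := fun i => (x i : ℝ) with hXdef
  set n : ℝ := ‖X‖ with hndef
  have hn2 : 2 ≤ n := hx
  have hnpos : 0 < n := by linarith
  -- choose the maximal coordinate
  have hsne : Nonempty (Fin s) := Fin.pos_iff_nonempty.1 hs
  obtain ⟨i₀, -, hi₀⟩ := Finset.exists_mem_eq_sup (Finset.univ : Finset (Fin s))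
    Finset.univ_nonempty (fun i => ‖X i‖₊)
  have hXi₀ : |X i₀| = n := by
    rw [hndef, Pi.norm_def, hi₀]
    simp [Real.norm_eq_abs]
  -- basic bounds
  set δ : ℝ := n ^ (-σ) with hδdef
  have hδpos : 0 < δ := Real.rpow_pos_of_pos hnpos _
  have hδn : δ ≤ n := by
    calc δ ≤ n ^ (1 : ℝ) :=
          Real.rpow_le_rpow_of_exponent_le (by linarith) (by linarith)
      _ = n := Real.rpow_one n
  have hzδ : 1 ≤ (z : ℝ) - δ := by
    nlinarith [mul_nonneg (by linarith : (0:ℝ) ≤ n - 2) (by linarith : (0:ℝ) ≤ n + 1)]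
  have hz3 : 3 ≤ (z : ℝ) := by nlinarith
  set a : ℝ := Real.sqrt ((z : ℝ) - δ) with hadef
  set b : ℝ := Real.sqrt ((z : ℝ) + δ) with hbdef
  have ha0 : 0 ≤ a := Real.sqrt_nonneg _
  have hb0 : 0 ≤ b := Real.sqrt_nonneg _
  have ha2 : a ^ 2 = (z : ℝ) - δ := Real.sq_sqrt (by linarith)
  have hb2 : b ^ 2 = (z : ℝ) + δ := Real.sq_sqrt (by linarith)
  have hab : a ≤ b := Real.sqrt_le_sqrt (by linarith)
  have hba0 : 0 ≤ b - a := by linarith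
  have hsz0 : (0:ℝ) < Real.sqrt z := Real.sqrt_pos.2 (by linarith)
  have hszb : Real.sqrt z ≤ b := Real.sqrt_le_sqrt (by linarith)
  have hba : (b - a) * Real.sqrt z ≤ 2 * δ := by
    have h1 : (b - a) * Real.sqrt z ≤ (b - a) * (b + a) := by
      apply mul_le_mul_of_nonneg_left _ hba0
      linarith
    nlinarith
  have hkey : b - a ≤ 2 * δ * (Real.sqrt z)⁻¹ := by
    rw [← div_eq_mul_inv]
    exact (le_div_iff₀ hsz0).2 hba
  -- the linear map
  set M : Matrix (Fin s) (Fin s) ℝ := Matrix.updateRow 1 i₀ X with hMdef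
  have hdet : M.det = X i₀ := by
    have h1 : X = ∑ k, X k • (1 : Matrix (Fin s) (Fin s) ℝ) k := by
      ext j
      simp [Matrix.one_apply]
    rw [hMdef]
    conv_lhs => rw [h1]
    rw [Matrix.det_updateRow_sum]
    simp
  have hdetf : LinearMap.det (Matrix.toLin' M) = X i₀ := by
    rw [LinearMap.det_toLin', hdet]
  have hXi₀ne : X i₀ ≠ 0 := by
    intro h; rw [h] at hXi₀; simp at hXi₀; linarith
  have hfα : ∀ α : Fin s → ℝ, ∀ j, Matrix.toLin' M α j =
      if j = i₀ then ∑ i, α i * X i else α j := by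
    intro α j
    rw [Matrix.toLin'_apply]
    by_cases h : j = i₀
    · simp [Matrix.mulVec, dotProduct, hMdef, h, mul_comm]
    · simp [Matrix.mulVec, dotProduct, hMdef, h, Matrix.updateRow_ne,
        Matrix.one_apply]
  -- the two slabs
  set B : Set ℝ → Set (Fin s → ℝ) := fun I =>
    Set.pi Set.univ (fun j => if j = i₀ then I else Set.Icc (-R) R) with hBdef
  set I₁ : Set ℝ := Set.Ioo (a - ξ) (b - ξ) with hI₁def
  set I₂ : Set ℝ := Set.Ioo (-b - ξ) (-a - ξ) with hI₂def
  -- the inclusion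
  have hsub : {α ∈ Ω |
      |(z : ℝ) - ((∑ i : Fin s, α i * X i) + ξ) ^ 2| < n ^ (-σ)} ⊆
      (Matrix.toLin' M) ⁻¹' (B I₁) ∪ (Matrix.toLin' M) ⁻¹' (B I₂) := by
    rintro α ⟨hαΩ, hαlt⟩
    set L : ℝ := ∑ i, α i * X i with hLdef
    have hαR : ∀ j, α j ∈ Set.Icc (-R) R := by
      intro j
      have h1 : ‖α‖ ≤ R := by
        have := hΩR hαΩ
        rwa [Metric.mem_closedBall, dist_zero_right] at this
      have h2 : |α j| ≤ R := le_trans (norm_le_pi_norm α j) h1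
      rw [Set.mem_Icc]
      constructor <;> [linarith [neg_abs_le (α j)]; linarith [le_abs_self (α j)]]
    rw [abs_lt] at hαlt
    have hsq1 : (z : ℝ) - δ < (L + ξ) ^ 2 := by linarith [hαlt.2]
    have hsq2 : (L + ξ) ^ 2 < (z : ℝ) + δ := by linarith [hαlt.1]
    have habs1 : a < |L + ξ| := by
      have := Real.sqrt_lt_sqrt (by linarith : (0:ℝ) ≤ (z:ℝ) - δ) hsq1
      rwa [Real.sqrt_sq_eq_abs] at this
    have habs2 : |L + ξ| < b := by
      have := Real.sqrt_lt_sqrt (by positivity) hsq2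
      rwa [Real.sqrt_sq_eq_abs] at this
    rcases le_or_gt 0 (L + ξ) with hsgn | hsgn
    · left
      rw [Set.mem_preimage, hBdef]
      rw [Set.mem_univ_pi]
      intro j
      rw [hfα]
      by_cases h : j = i₀
      · rw [if_pos h, if_pos h, hI₁def]
        rw [abs_of_nonneg hsgn] at habs1 habs2
        exact Set.mem_Ioo.2 ⟨by linarith, by linarith⟩
      · rw [if_neg h, if_neg h]
        exact hαR j
    · right
      rw [Set.mem_preimage, hBdef]
      rw [Set.mem_univ_pi]
      intro j
      rw [hfα]
      by_cases h : j = i₀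
      · rw [if_pos h, if_pos h, hI₂def]
        rw [abs_of_neg hsgn] at habs1 habs2
        exact Set.mem_Ioo.2 ⟨by linarith, by linarith⟩
      · rw [if_neg h, if_neg h]
        exact hαR j
  -- volume of a slab
  have hBvol : ∀ c d : ℝ, volume (B (Set.Ioo c d)) =
      ENNReal.ofReal (d - c) * ENNReal.ofReal (2 * R) ^ (s - 1) := by
    intro c d
    rw [hBdef]
    simp only
    rw [volume_pi_pi]
    rw [← Finset.mul_prod_erase Finset.univ _ (Finset.mem_univ i₀)]
    rw [if_pos rfl, Real.volume_Ioo]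
    congr 1
    have hconst : ∀ j ∈ Finset.univ.erase i₀,
        volume (if j = i₀ then Set.Ioo c d else Set.Icc (-R) R)
          = ENNReal.ofReal (2 * R) := by
      intro j hj
      rw [if_neg (Finset.ne_of_mem_erase hj), Real.volume_Icc,
        show R - -R = 2 * R by ring]
    rw [Finset.prod_congr rfl hconst, Finset.prod_const,
      Finset.card_erase_of_mem (Finset.mem_univ i₀)]
    simp
  have hinv : |(X i₀)⁻¹| = n⁻¹ := by rw [abs_inv, hXi₀]
  set P : ℝ := (2 * R) ^ (s - 1) with hPdef
  have hPpos : 0 < P := by positivity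
  set T : ℝ := n⁻¹ * ((b - a) * P) with hTdef
  have hT0 : 0 ≤ T := by positivity
  have hofT : ENNReal.ofReal n⁻¹ * (ENNReal.ofReal (b - a) * ENNReal.ofReal (2 * R) ^ (s - 1))
      = ENNReal.ofReal T := by
    conv_rhs => rw [hTdef, hPdef, ENNReal.ofReal_mul (by positivity : (0:ℝ) ≤ n⁻¹),
      ENNReal.ofReal_mul hba0, ENNReal.ofReal_pow (by positivity : (0:ℝ) ≤ 2 * R)]
  -- put everything together
  calc volume {α ∈ Ω | |(z : ℝ) - ((∑ i : Fin s, α i * X i) + ξ) ^ 2| < n ^ (-σ)}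
      ≤ volume ((Matrix.toLin' M) ⁻¹' (B I₁) ∪ (Matrix.toLin' M) ⁻¹' (B I₂)) :=
        measure_mono hsub
    _ ≤ volume ((Matrix.toLin' M) ⁻¹' (B I₁)) + volume ((Matrix.toLin' M) ⁻¹' (B I₂)) :=
        measure_union_le _ _
    _ = ENNReal.ofReal |(X i₀)⁻¹| * volume (B I₁)
        + ENNReal.ofReal |(X i₀)⁻¹| * volume (B I₂) := by
        rw [Measure.addHaar_preimage_linearMap volume (by rw [hdetf]; exact hXi₀ne),
          Measure.addHaar_preimage_linearMap volume (by rw [hdetf]; exact hXi₀ne), hdetf]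
    _ = ENNReal.ofReal T + ENNReal.ofReal T := by
        rw [hI₁def, hI₂def, hBvol, hBvol, hinv,
          show b - ξ - (a - ξ) = b - a by ring, show -a - ξ - (-b - ξ) = b - a by ring,
          hofT]
    _ = ENNReal.ofReal (T + T) := (ENNReal.ofReal_add hT0 hT0).symm
    _ ≤ ENNReal.ofReal (4 * (2 * R) ^ (s - 1) * n ^ (-σ - 1) * (z : ℝ) ^ (-(1 : ℝ) / 2)) := by
        apply ENNReal.ofReal_le_ofReal
        have hnσ1 : n ^ (-σ - 1) = δ * n⁻¹ := by
          rw [hδdef, show -σ - 1 = -σ + (-1) by ring, Real.rpow_add hnpos,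
            Real.rpow_neg_one]
        have hzhalf : (z : ℝ) ^ (-(1 : ℝ) / 2) = (Real.sqrt z)⁻¹ := by
          rw [show (-(1:ℝ)/2) = -(1/2) by ring, Real.rpow_neg (by linarith),
            ← Real.sqrt_eq_rpow]
        rw [hnσ1, hzhalf, hTdef, ← hPdef]
        have hmul := mul_le_mul_of_nonneg_left hkey
          (by positivity : (0:ℝ) ≤ n⁻¹ * P)
        nlinarith [hmul]
end

section
/- Let U ⊂ ℝᴺ be open, let φ : U → ℝᵐ be continuously differentiable, and let g₀ ∈ U be a point at which the derivative Dφ(g₀) : ℝᴺ → ℝᵐ is surjective. Then there exist a bounded open neighborhood B ⊂ U of g₀ and constants c > 0, ε₀ > 0 such that for every ε ∈ (0, ε₀), the N-dimensional Lebesgue measure of the set {g ∈ B : ‖φ(g) − φ(g₀)‖ < ε} is at least c·εᵐ. -/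
open MeasureTheory
open scoped ENNReal NNReal

/-- **Lemma (measure lower bound for sublevel sets of a submersion).**
Let `U ⊆ ℝᴺ` be open, `φ : U → ℝᵐ` continuously differentiable, and suppose the derivative
`φ' = Dφ(g₀)` at `g₀ ∈ U` is surjective.  Then there are a bounded open neighborhood
`B ⊆ U` of `g₀` and constants `c > 0`, `ε₀ > 0` such that for all `ε ∈ (0,ε₀)`,
`vol {g ∈ B : ‖φ(g) − φ(g₀)‖ < ε} ≥ c·εᵐ`. -/
theorem measure_lower_bound_for_submersion_sublevel_sets
    (N m : ℕ) (U : Set (Fin N → ℝ)) (hU : IsOpen U)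
    (φ : (Fin N → ℝ) → (Fin m → ℝ)) (hφ : ContDiffOn ℝ 1 φ U)
    (g₀ : Fin N → ℝ) (hg₀ : g₀ ∈ U)
    (φ' : (Fin N → ℝ) →L[ℝ] (Fin m → ℝ)) (hφ' : HasFDerivAt φ φ' g₀)
    (hsurj : Function.Surjective φ') :
    ∃ B : Set (Fin N → ℝ), IsOpen B ∧ Bornology.IsBounded B ∧ g₀ ∈ B ∧ B ⊆ U ∧
      ∃ c > (0 : ℝ), ∃ ε₀ > (0 : ℝ), ∀ ε : ℝ, 0 < ε → ε < ε₀ →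
        ENNReal.ofReal (c * ε ^ m) ≤ volume {g ∈ B | ‖φ g - φ g₀‖ < ε} := by
  classical
  -- ### Linear algebra: a right inverse of `φ'` and a product decomposition of `ℝᴺ`
  obtain ⟨T, hT⟩ := (φ' : (Fin N → ℝ) →ₗ[ℝ] (Fin m → ℝ)).exists_rightInverse_of_surjective
    (LinearMap.range_eq_top.2 hsurj)
  have hTapp : ∀ v, φ' (T v) = v := fun v => by simpa using DFunLike.congr_fun hT v
  set Kk := LinearMap.ker (φ' : (Fin N → ℝ) →ₗ[ℝ] (Fin m → ℝ)) with hKk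
  set n' := Module.finrank ℝ Kk with hn'
  let κ : (Fin n' → ℝ) ≃ₗ[ℝ] Kk := (Module.finBasis ℝ Kk).equivFun.symm
  let fwd : (Fin n' → ℝ) × (Fin m → ℝ) →ₗ[ℝ] (Fin N → ℝ) :=
    LinearMap.coprod (Kk.subtype ∘ₗ (κ : (Fin n' → ℝ) →ₗ[ℝ] Kk)) T
  have hfwd_apply : ∀ u v, fwd (u, v) = (κ u : Fin N → ℝ) + T v := fun u v => rfl
  have hφfwd : ∀ u v, φ' (fwd (u, v)) = v := by
    intro u v
    have h1 : φ' ((κ u : Fin N → ℝ)) = 0 := (κ u).2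
    rw [hfwd_apply, map_add, h1, hTapp, zero_add]
  have hinj : Function.Injective fwd := by
    rw [← LinearMap.ker_eq_bot]
    apply LinearMap.ker_eq_bot'.2
    rintro ⟨u, v⟩ h
    have hv : v = 0 := by
      have h2 := hφfwd u v; rw [h] at h2; simpa using h2.symm
    have hu0 : (κ u : Fin N → ℝ) = 0 := by
      have := hfwd_apply u v
      rw [h, hv] at this
      simpa using this.symm
    have : κ u = 0 := Subtype.ext hu0
    have hu : u = 0 := by simpa using congrArg κ.symm this
    simp [hu, hv, Prod.ext_iff]
  have hsurjf : Function.Surjective fwd := by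
    intro x
    refine ⟨(κ.symm ⟨x - T (φ' x), ?_⟩, φ' x), ?_⟩
    · simp [hKk, LinearMap.mem_ker, map_sub, hTapp]
    · rw [hfwd_apply, LinearEquiv.apply_symm_apply]
      simp
  let E := LinearEquiv.ofBijective fwd ⟨hinj, hsurjf⟩
  have hEapp : ∀ u v, E (u, v) = (κ u : Fin N → ℝ) + T v := fun u v => rfl
  have hEcont : Continuous ⇑E := by
    have := LinearMap.continuous_of_finiteDimensional
      (E : (Fin n' → ℝ) × (Fin m → ℝ) →ₗ[ℝ] (Fin N → ℝ))
    simpa using this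
  -- ### Haar measure comparison for the linear equivalence `E`
  haveI : (volume : Measure ((Fin n' → ℝ) × (Fin m → ℝ))).IsAddHaarMeasure := by
    rw [Measure.volume_eq_prod]; exact Measure.prod.instIsAddHaarMeasure _ _
  set ν : Measure (Fin N → ℝ) := Measure.map (⇑E) volume with hν
  haveI hνHaar : ν.IsAddHaarMeasure :=
    Measure.MapLinearEquiv.isAddHaarMeasure _ E
  set c₀ : NNReal := Measure.addHaarScalarFactor ν volume with hc₀
  have hc₀pos : 0 < c₀ := Measure.addHaarScalarFactor_pos_of_isAddHaarMeasure ν volume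
  have hνeq : ν = c₀ • volume := Measure.isAddLeftInvariant_eq_smul ν volume
  -- ### Analysis: the auxiliary map `F` and the inverse function theorem
  have hφat : ContDiffAt ℝ 1 φ g₀ := hφ.contDiffAt (hU.mem_nhds hg₀)
  have hstrict : HasStrictFDerivAt φ φ' g₀ := hφat.hasStrictFDerivAt' hφ' one_ne_zero
  set Tc : (Fin m → ℝ) →L[ℝ] (Fin N → ℝ) := LinearMap.toContinuousLinearMap T with hTc
  set F : (Fin N → ℝ) → (Fin N → ℝ) :=
    fun g => g + Tc (φ g - φ g₀ - φ' (g - g₀)) with hFdef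
  have hTcapp : ∀ v, φ' (Tc v) = v := hTapp
  have keyF : ∀ g, φ' (F g - g₀) = φ g - φ g₀ := by
    intro g
    have h1 : F g - g₀ = (g - g₀) + Tc (φ g - φ g₀ - φ' (g - g₀)) := by
      rw [hFdef]; dsimp only; abel
    rw [h1, map_add, hTcapp]
    abel
  have hFg₀ : F g₀ = g₀ := by simp [hFdef]
  have hF : HasStrictFDerivAt F
      ((ContinuousLinearEquiv.refl ℝ (Fin N → ℝ) :
        (Fin N → ℝ) ≃L[ℝ] (Fin N → ℝ)) : (Fin N → ℝ) →L[ℝ] (Fin N → ℝ)) g₀ := by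
    have h1 : HasStrictFDerivAt (fun g => φ g - φ g₀) φ' g₀ := hstrict.sub_const _
    have h2 : HasStrictFDerivAt (fun g : Fin N → ℝ => φ' (g - g₀)) φ' g₀ := by
      simpa [map_sub] using (φ'.hasStrictFDerivAt (x := g₀)).sub_const (φ' g₀)
    have h3 := Tc.hasStrictFDerivAt.comp g₀ (h1.sub h2)
    have h4 := (hasStrictFDerivAt_id g₀).add h3
    simpa [hFdef, sub_self] using h4
  set h := hF.toOpenPartialHomeomorph F with hh
  have hhcoe : ⇑h = F := hF.toOpenPartialHomeomorph_coe
  have hsrc : g₀ ∈ h.source := hF.mem_toOpenPartialHomeomorph_source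
  -- Lipschitz bound near `g₀`
  obtain ⟨K, t, ht, hlip⟩ := hF.exists_lipschitzOnWith
  set Kp : NNReal := max K 1 with hKp
  have hlipKp : LipschitzOnWith Kp F t := fun x hx y hy =>
    le_trans (hlip hx hy) (mul_le_mul_left (by exact_mod_cast le_max_left K 1) _)
  -- a ball around `g₀` inside everything
  have hmem : U ∩ (h.source ∩ t) ∈ nhds g₀ :=
    Filter.inter_mem (hU.mem_nhds hg₀) (Filter.inter_mem (h.open_source.mem_nhds hsrc) ht)
  obtain ⟨r, hr, hrsub⟩ := Metric.mem_nhds_iff.1 hmem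
  set B := Metric.ball g₀ r with hB
  have hBU : B ⊆ U := fun x hx => (hrsub hx).1
  have hBsrc : B ⊆ h.source := fun x hx => (hrsub hx).2.1
  have hBt : B ⊆ t := fun x hx => (hrsub hx).2.2
  have hg₀B : g₀ ∈ B := Metric.mem_ball_self hr
  -- the image of `B` under `F` is open and contains a ball around `g₀`
  have hWopen : IsOpen (F '' B) := by
    have := h.isOpen_image_of_subset_source Metric.isOpen_ball hBsrc
    rwa [hhcoe] at this
  have hg₀W : g₀ ∈ F '' B := ⟨g₀, hg₀B, hFg₀⟩
  obtain ⟨ρ, hρ, hρsub⟩ := Metric.isOpen_iff.1 hWopen g₀ hg₀W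
  -- choose `η` so that `E` maps the `η`-ball into the `ρ`-ball
  have hpre : IsOpen (⇑E ⁻¹' Metric.ball (0 : Fin N → ℝ) ρ) :=
    Metric.isOpen_ball.preimage hEcont
  have h0pre : (0 : (Fin n' → ℝ) × (Fin m → ℝ)) ∈ ⇑E ⁻¹' Metric.ball 0 ρ := by
    simp only [Set.mem_preimage, map_zero]
    exact Metric.mem_ball_self hρ
  obtain ⟨η, hη, hηsub⟩ := Metric.isOpen_iff.1 hpre 0 h0pre
  -- ### The constants
  set P : ℝ≥0∞ := ENNReal.ofReal ((2 * η) ^ n' * 2 ^ m) with hP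
  have hP0 : P ≠ 0 := by
    rw [hP]
    simp only [ne_eq, ENNReal.ofReal_eq_zero, not_le]
    positivity
  have hPtop : P ≠ ⊤ := ENNReal.ofReal_ne_top
  have hKp0 : (Kp : ℝ≥0∞) ≠ 0 := by
    simp only [ne_eq, ENNReal.coe_eq_zero]
    exact (lt_of_lt_of_le zero_lt_one (le_max_right K 1)).ne'
  set denom : ℝ≥0∞ := (c₀ : ℝ≥0∞) * (Kp : ℝ≥0∞) ^ (N : ℝ) with hdenom
  have hdenom0 : denom ≠ 0 := by
    apply mul_ne_zero
    · exact_mod_cast hc₀pos.ne'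
    · exact (ENNReal.rpow_pos (pos_iff_ne_zero.2 hKp0) ENNReal.coe_ne_top).ne'
  have hdenomtop : denom ≠ ⊤ :=
    ENNReal.mul_ne_top ENNReal.coe_ne_top
      (ENNReal.rpow_ne_top_of_nonneg (Nat.cast_nonneg N) ENNReal.coe_ne_top)
  have hdiv0 : P / denom ≠ 0 := by
    simp [ENNReal.div_eq_zero_iff, hP0, hdenomtop]
  have hdivtop : P / denom ≠ ⊤ := (ENNReal.div_lt_top hPtop hdenom0).ne
  set c : ℝ := (P / denom).toReal with hc
  have hcpos : 0 < c := ENNReal.toReal_pos hdiv0 hdivtop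
  refine ⟨B, Metric.isOpen_ball, Metric.isBounded_ball, hg₀B, hBU, c, hcpos, η, hη, ?_⟩
  intro ε hε hεη
  -- ### The sets
  set V : Set ((Fin n' → ℝ) × (Fin m → ℝ)) := Metric.ball 0 η ×ˢ Metric.ball 0 ε with hV
  have hVopen : IsOpen V := Metric.isOpen_ball.prod Metric.isOpen_ball
  have hVball : V ⊆ Metric.ball (0 : (Fin n' → ℝ) × (Fin m → ℝ)) η := by
    rw [← ball_prod_same]
    exact Set.prod_mono subset_rfl (Metric.ball_subset_ball hεη.le)
  have hEVρ : ⇑E '' V ⊆ Metric.ball (0 : Fin N → ℝ) ρ := by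
    rintro y ⟨p, hp, rfl⟩
    exact hηsub (hVball hp)
  set Cε : Set (Fin N → ℝ) := (fun x => -g₀ + x) ⁻¹' (⇑E '' V) with hCε
  have hCεW : Cε ⊆ F '' B := by
    intro x hx
    apply hρsub
    have h1 : -g₀ + x ∈ Metric.ball (0 : Fin N → ℝ) ρ := hEVρ hx
    rw [mem_ball_zero_iff, neg_add_eq_sub] at h1
    rw [Metric.mem_ball, dist_eq_norm]
    exact h1
  set A : Set (Fin N → ℝ) := B ∩ F ⁻¹' Cε with hA
  have hAsub : A ⊆ {g ∈ B | ‖φ g - φ g₀‖ < ε} := by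
    rintro g ⟨hgB, hgC⟩
    refine ⟨hgB, ?_⟩
    obtain ⟨⟨u, v⟩, hmem, heq⟩ := hgC
    have h1 : φ g - φ g₀ = v := by
      rw [← keyF g]
      have h2 : F g - g₀ = E (u, v) := by rw [← neg_add_eq_sub, heq]
      rw [h2]
      exact hφfwd u v
    rw [h1]
    exact mem_ball_zero_iff.1 hmem.2
  have hFA : F '' A = Cε := by
    apply Set.Subset.antisymm
    · rintro y ⟨g, ⟨hgB, hgC⟩, rfl⟩; exact hgC
    · intro y hy
      obtain ⟨b, hbB, hbE⟩ := hCεW hy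
      exact ⟨b, ⟨hbB, by rw [Set.mem_preimage, hbE]; exact hy⟩, hbE⟩
  -- ### Measure estimates
  have hμH : (μH[(N : ℝ)] : Measure (Fin N → ℝ)) = volume := by
    have := hausdorffMeasure_pi_real (ι := Fin N)
    simpa using this
  have hHaus : μH[(N : ℝ)] (F '' A) ≤ (Kp : ℝ≥0∞) ^ (N : ℝ) * μH[(N : ℝ)] A :=
    (hlipKp.mono (Set.inter_subset_left.trans hBt)).hausdorffMeasure_image_le
      (Nat.cast_nonneg N)
  rw [hμH, hFA] at hHaus
  have hCvol : volume Cε = volume (⇑E '' V) := by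
    rw [hCε]
    exact measure_preimage_add volume (-g₀) _
  have hEVopen : IsOpen (⇑E '' V) := by
    have h1 : ⇑E '' V = ⇑(E.toContinuousLinearEquiv) '' V := by
      rw [LinearEquiv.coe_toContinuousLinearEquiv']
    rw [h1]
    exact E.toContinuousLinearEquiv.toHomeomorph.isOpenMap _ hVopen
  have hνEV : (c₀ : ℝ≥0∞) * volume (⇑E '' V) = volume V := by
    have h1 : ν (⇑E '' V) = volume (⇑E ⁻¹' (⇑E '' V)) :=
      Measure.map_apply hEcont.measurable hEVopen.measurableSet
    rw [Set.preimage_image_eq _ E.injective] at h1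
    rw [hνeq] at h1
    rw [Measure.smul_apply, ENNReal.smul_def, smul_eq_mul] at h1
    exact h1
  have hVvol : volume V = P * ENNReal.ofReal (ε ^ m) := by
    rw [hV, Measure.volume_eq_prod, Measure.prod_prod,
      Real.volume_pi_ball _ hη, Real.volume_pi_ball _ hε]
    rw [hP, ← ENNReal.ofReal_mul (by positivity), ← ENNReal.ofReal_mul (by positivity)]
    congr 1
    simp only [Fintype.card_fin]
    rw [mul_pow]
    ring
  have hchain : P * ENNReal.ofReal (ε ^ m) ≤ denom * volume A := by
    calc P * ENNReal.ofReal (ε ^ m) = volume V := hVvol.symm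
      _ = (c₀ : ℝ≥0∞) * volume (⇑E '' V) := hνEV.symm
      _ = (c₀ : ℝ≥0∞) * volume Cε := by rw [hCvol]
      _ ≤ (c₀ : ℝ≥0∞) * ((Kp : ℝ≥0∞) ^ (N : ℝ) * volume A) := mul_le_mul_right hHaus _
      _ = denom * volume A := by rw [hdenom, mul_assoc]
  calc ENNReal.ofReal (c * ε ^ m)
      = (P / denom) * ENNReal.ofReal (ε ^ m) := by
        rw [ENNReal.ofReal_mul hcpos.le, hc, ENNReal.ofReal_toReal hdivtop]
    _ = (P * ENNReal.ofReal (ε ^ m)) / denom := by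
        rw [div_eq_mul_inv, div_eq_mul_inv]; ring
    _ ≤ volume A := ENNReal.div_le_of_le_mul' hchain
    _ ≤ volume {g ∈ B | ‖φ g - φ g₀‖ < ε} := measure_mono hAsub
end
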